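/- arXiv:2211.01701 — 5 statements merged into one kernel-verified Lean document; each statement's English description precedes it below -/
import Mathlib

section
/- If a vertex v in an undirected graph G is contained in fewer than ℓ triangles of G, then v is not contained in any vertex-ℓ-triangle 2-club of G; hence deleting v does not change the set of vertex-ℓ-triangle 2-clubs. -/
open Finset

variable {V : Type*}

/-- `S` is a 2-club: any two vertices of `S` are joined by a walk of length at most 2
whose vertices all lie in `S` (i.e. `G[S]` has diameter at most 2). -/
def IsTwoClub (G : SimpleGraph V) (S : Finset V) : Prop :=
  ∀ u ∈ S, ∀ w ∈ S, ∃ p : G.Walk u w, p.length ≤ 2 ∧ ∀ x ∈ p.support, x ∈ S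

/-- The number of triangles of `G` containing `v`. -/
def triCount [Fintype V] [DecidableEq V] (G : SimpleGraph V) [DecidableRel G.Adj] (v : V) : ℕ :=
  ((G.cliqueFinset 3).filter (fun t => v ∈ t)).card

/-- The number of triangles of `G[S]` containing `v`, i.e. triangles of `G` inside `S`. -/
def triCountIn [Fintype V] [DecidableEq V] (G : SimpleGraph V) [DecidableRel G.Adj]
    (v : V) (S : Finset V) : ℕ :=
  ((G.cliqueFinset 3).filter (fun t => v ∈ t ∧ t ⊆ S)).card

/-- `S` is a vertex-ℓ-triangle 2-club: `G[S]` has diameter at most 2 and every vertex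
of `S` lies in at least `ℓ` triangles of `G[S]`. -/
def IsVertexTriangleTwoClub [Fintype V] [DecidableEq V] (G : SimpleGraph V)
    [DecidableRel G.Adj] (ℓ : ℕ) (S : Finset V) : Prop :=
  IsTwoClub G S ∧ ∀ v ∈ S, ℓ ≤ triCountIn G v S

/-- The graph obtained from `G` by deleting the vertex `v` (making it isolated). -/
def deleteVertex (G : SimpleGraph V) (v : V) : SimpleGraph V where
  Adj a b := G.Adj a b ∧ a ≠ v ∧ b ≠ v
  symm := ⟨fun a b ⟨h, ha, hb⟩ => ⟨h.symm, hb, ha⟩⟩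
  loopless := ⟨fun a ⟨h, _, _⟩ => G.loopless.irrefl a h⟩

instance (G : SimpleGraph V) [DecidableRel G.Adj] [DecidableEq V] (v : V) :
    DecidableRel (deleteVertex G v).Adj :=
  fun a b => inferInstanceAs (Decidable (G.Adj a b ∧ a ≠ v ∧ b ≠ v))

lemma triCountIn_le_triCount [Fintype V] [DecidableEq V] (G : SimpleGraph V)
    [DecidableRel G.Adj] (v : V) (S : Finset V) : triCountIn G v S ≤ triCount G v := by
  apply Finset.card_le_card
  intro t ht
  simp only [Finset.mem_filter] at ht ⊢
  exact ⟨ht.1, ht.2.1⟩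

lemma triCountIn_eq [Fintype V] [DecidableEq V] (G : SimpleGraph V) [DecidableRel G.Adj]
    (v : V) (S : Finset V) (hv : v ∉ S) (u : V) :
    triCountIn G u S = triCountIn (deleteVertex G v) u S := by
  unfold triCountIn
  congr 1
  ext t
  simp only [Finset.mem_filter, SimpleGraph.mem_cliqueFinset_iff]
  constructor
  · rintro ⟨ht, hu, hts⟩
    refine ⟨⟨fun a ha b hb hab => ?_, ht.2⟩, hu, hts⟩
    exact ⟨ht.1 ha hb hab, fun h => hv (hts (h ▸ ha)), fun h => hv (hts (h ▸ hb))⟩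
  · rintro ⟨ht, hu, hts⟩
    exact ⟨⟨fun a ha b hb hab => (ht.1 ha hb hab).1, ht.2⟩, hu, hts⟩

lemma twoClub_iff [Fintype V] [DecidableEq V] (G : SimpleGraph V) [DecidableRel G.Adj]
    (v : V) (S : Finset V) (hv : v ∉ S) :
    IsTwoClub G S ↔ IsTwoClub (deleteVertex G v) S := by
  constructor
  · intro hc u hu w hw
    obtain ⟨p, hp2, hps⟩ := hc u hu w hw
    refine ⟨p.transfer (deleteVertex G v) ?_, ?_, ?_⟩
    · intro e he
      induction e with
      | h a b =>
        rw [SimpleGraph.mem_edgeSet]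
        have ha : a ∈ S := hps a (p.fst_mem_support_of_mem_edges he)
        have hb : b ∈ S := hps b (p.snd_mem_support_of_mem_edges he)
        exact ⟨p.adj_of_mem_edges he, fun h => hv (h ▸ ha), fun h => hv (h ▸ hb)⟩
    · rwa [SimpleGraph.Walk.length_transfer]
    · intro x hx
      rw [SimpleGraph.Walk.support_transfer] at hx
      exact hps x hx
  · intro hc u hu w hw
    obtain ⟨p, hp2, hps⟩ := hc u hu w hw
    refine ⟨p.transfer G ?_, ?_, ?_⟩
    · intro e he
      induction e with
      | h a b =>
        rw [SimpleGraph.mem_edgeSet]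
        exact (p.adj_of_mem_edges he).1
    · rwa [SimpleGraph.Walk.length_transfer]
    · intro x hx
      rw [SimpleGraph.Walk.support_transfer] at hx
      exact hps x hx

lemma triCountIn_deleteVertex_self [Fintype V] [DecidableEq V] (G : SimpleGraph V)
    [DecidableRel G.Adj] (v : V) (S : Finset V) :
    triCountIn (deleteVertex G v) v S = 0 := by
  rw [triCountIn, Finset.card_eq_zero]
  ext t
  simp only [Finset.mem_filter, SimpleGraph.mem_cliqueFinset_iff, Finset.notMem_empty,
    iff_false]
  rintro ⟨ht, hvt, -⟩
  obtain ⟨a, ha, hav⟩ := Finset.exists_mem_ne (by rw [ht.2]; norm_num : 1 < t.card) v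
  exact ((ht.1 (Finset.mem_coe.2 hvt) (Finset.mem_coe.2 ha) (Ne.symm hav)).2.1) rfl

theorem stmt_0 [Fintype V] [DecidableEq V] (G : SimpleGraph V) [DecidableRel G.Adj]
    (ℓ : ℕ) (v : V) (h : triCount G v < ℓ) :
    (∀ S : Finset V, IsVertexTriangleTwoClub G ℓ S → v ∉ S) ∧
    (∀ S : Finset V, IsVertexTriangleTwoClub G ℓ S ↔
      IsVertexTriangleTwoClub (deleteVertex G v) ℓ S) := by
  have h1 : ∀ S : Finset V, IsVertexTriangleTwoClub G ℓ S → v ∉ S := by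
    intro S hS hvS
    have := hS.2 v hvS
    have := triCountIn_le_triCount G v S
    omega
  refine ⟨h1, fun S => ?_⟩
  constructor
  · intro hS
    have hv := h1 S hS
    exact ⟨(twoClub_iff G v S hv).1 hS.1,
      fun u hu => (triCountIn_eq G v S hv u) ▸ hS.2 u hu⟩
  · intro hS
    have hv : v ∉ S := by
      intro hvS
      have := hS.2 v hvS
      rw [triCountIn_deleteVertex_self] at this
      omega
    exact ⟨(twoClub_iff G v S hv).2 hS.1,
      fun u hu => (triCountIn_eq G v S hv u).symm ▸ hS.2 u hu⟩
end

section
/- If an edge e of a graph G is contained in fewer than ℓ triangles of G, then for every edge-ℓ-triangle 2-club S of G with witnessing spanning subgraph Ĝ = (S, Ê), the edge e is not in Ê; consequently S is still an edge-ℓ-triangle 2-club of G − e. -/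
open Finset

variable {V : Type*}

/-- The number of triangles of `H` containing the edge `ab`, i.e. the number of
common neighbors of `a` and `b` in `H`. -/
noncomputable def edgeTriCount (H : SimpleGraph V) (a b : V) : ℕ :=
  {x | H.Adj a x ∧ H.Adj b x}.ncard

/-- `H` witnesses that `S` is an edge-ℓ-triangle 2-club of `G`: `H` is a spanning
subgraph of `G[S]` of diameter at most 2 in which every edge lies in at least
`ℓ` triangles. -/
def IsWitness (G : SimpleGraph V) (ℓ : ℕ) (S : Finset V) (H : SimpleGraph V) : Prop :=
  H ≤ G ∧ (∀ a b, H.Adj a b → a ∈ S ∧ b ∈ S) ∧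
    (∀ u ∈ S, ∀ w ∈ S, ∃ p : H.Walk u w, p.length ≤ 2) ∧
    (∀ a b, H.Adj a b → ℓ ≤ edgeTriCount H a b)

/-- `S` is an edge-ℓ-triangle 2-club of `G`. -/
def IsEdgeTriangleTwoClub (G : SimpleGraph V) (ℓ : ℕ) (S : Finset V) : Prop :=
  ∃ H : SimpleGraph V, IsWitness G ℓ S H

lemma edgeTriCount_mono [Fintype V] {H G : SimpleGraph V} (hle : H ≤ G) (a b : V) :
    edgeTriCount H a b ≤ edgeTriCount G a b := by
  apply Set.ncard_le_ncard
  · intro x hx; exact ⟨hle hx.1, hle hx.2⟩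
  · exact Set.toFinite _

theorem stmt_2 [Fintype V] (G : SimpleGraph V) (ℓ : ℕ) (u w : V)
    (hadj : G.Adj u w) (hlow : edgeTriCount G u w < ℓ) :
    (∀ (S : Finset V) (H : SimpleGraph V), IsWitness G ℓ S H → ¬ H.Adj u w) ∧
    (∀ S : Finset V, IsEdgeTriangleTwoClub G ℓ S →
      IsEdgeTriangleTwoClub (G.deleteEdges {s(u, w)}) ℓ S) := by
  have key : ∀ (S : Finset V) (H : SimpleGraph V), IsWitness G ℓ S H → ¬ H.Adj u w := by
    intro S H ⟨hle, _, _, htri⟩ hAdj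
    exact absurd (le_trans (htri u w hAdj) (edgeTriCount_mono hle u w)) (not_le.mpr hlow)
  refine ⟨key, ?_⟩
  rintro S ⟨H, hw⟩
  refine ⟨H, ?_, hw.2⟩
  intro a b hab
  rw [SimpleGraph.deleteEdges_adj]
  refine ⟨hw.1 hab, ?_⟩
  simp only [Set.mem_singleton_iff, Sym2.eq, Sym2.rel_iff', Prod.mk.injEq, Prod.swap_prod_mk]
  rintro (⟨rfl, rfl⟩ | ⟨rfl, rfl⟩)
  · exact key S H hw hab
  · exact key S H hw hab.symm
end

section
/- Let G be a graph, let v be a vertex, let u ≠ v be another vertex, let x_v be the number of triangles of G containing v, and let x_{uv} be the number of triangles of G containing both u and v. If x_v − x_{uv} < ℓ, then every vertex-ℓ-triangle 2-club of G that contains v also contains u. -/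
open Finset

variable {V : Type*}

/-- The number of triangles of `G` containing both `u` and `v`. -/
def triCountPair [Fintype V] [DecidableEq V] (G : SimpleGraph V) [DecidableRel G.Adj]
    (u v : V) : ℕ :=
  ((G.cliqueFinset 3).filter (fun t => u ∈ t ∧ v ∈ t)).card

theorem stmt_9 [Fintype V] [DecidableEq V] (G : SimpleGraph V) [DecidableRel G.Adj]
    (ℓ : ℕ) (u v : V) (hne : u ≠ v)
    (h : triCount G v - triCountPair G u v < ℓ) :
    ∀ S : Finset V, IsVertexTriangleTwoClub G ℓ S → v ∈ S → u ∈ S := by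
  intro S ⟨_, hcnt⟩ hvS
  by_contra hu
  have hle : triCountIn G v S ≤ triCount G v - triCountPair G u v := by
    unfold triCountIn triCount triCountPair
    have hsub : (G.cliqueFinset 3).filter (fun t => v ∈ t ∧ t ⊆ S) ⊆
        ((G.cliqueFinset 3).filter (fun t => v ∈ t)) \
        ((G.cliqueFinset 3).filter (fun t => u ∈ t ∧ v ∈ t)) := by
      intro t ht
      simp only [mem_filter, mem_sdiff] at ht ⊢
      exact ⟨⟨ht.1, ht.2.1⟩, fun h' => hu (ht.2.2 h'.2.1)⟩
    calc _ ≤ _ := card_le_card hsub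
      _ = _ := card_sdiff_of_subset (by
        intro t ht; simp only [mem_filter] at ht ⊢; exact ⟨ht.1, ht.2.2⟩)
  exact absurd (hcnt v hvS) (by omega)
end

section
/- Let G be a graph and v a vertex. Consider the induced subgraph G_v = G[N[v]] of the closed neighborhood of v, and let S_v be the vertex set obtained from G_v by iteratively deleting vertices contained in fewer than ℓ triangles until no such vertex remains, assuming v survives this process. Then S_v is a vertex-ℓ-triangle 2-club, and moreover S_v is a maximum-cardinality vertex-ℓ-triangle 2-club among those contained in N[v]. -/
open Finset

variable {V : Type*}

/-- One step of the deletion procedure: delete a vertex lying in fewer than `ℓ`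
triangles of the current induced graph. -/
inductive DelStep [Fintype V] [DecidableEq V] (G : SimpleGraph V) [DecidableRel G.Adj]
    (ℓ : ℕ) : Finset V → Finset V → Prop
  | step (T : Finset V) (w : V) (hw : w ∈ T) (hbad : triCountIn G w T < ℓ) :
      DelStep G ℓ T (T.erase w)

lemma triCountIn_mono [Fintype V] [DecidableEq V] (G : SimpleGraph V) [DecidableRel G.Adj]
    (w : V) {S T : Finset V} (h : S ⊆ T) : triCountIn G w S ≤ triCountIn G w T := by
  apply Finset.card_le_card
  intro t ht
  simp only [Finset.mem_filter] at ht ⊢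
  exact ⟨ht.1, ht.2.1, ht.2.2.trans h⟩

lemma reach_subset [Fintype V] [DecidableEq V] {G : SimpleGraph V} [DecidableRel G.Adj]
    {ℓ : ℕ} {A B : Finset V} (h : Relation.ReflTransGen (DelStep G ℓ) A B) : B ⊆ A := by
  induction h with
  | refl => exact Finset.Subset.refl _
  | tail _ step ih =>
    cases step with
    | step w hw hbad => exact (Finset.erase_subset _ _).trans ih

lemma club_subset_reach [Fintype V] [DecidableEq V] {G : SimpleGraph V} [DecidableRel G.Adj]
    {ℓ : ℕ} {A B S : Finset V} (h : Relation.ReflTransGen (DelStep G ℓ) A B)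
    (hS : ∀ w ∈ S, ℓ ≤ triCountIn G w S) (hSA : S ⊆ A) : S ⊆ B := by
  induction h with
  | refl => exact hSA
  | tail _ step ih =>
    cases step with
    | step w hw hbad =>
      intro x hx
      rw [Finset.mem_erase]
      refine ⟨?_, ih hx⟩
      rintro rfl
      exact absurd (le_trans (hS x hx) (triCountIn_mono G x ih)) (not_le.mpr hbad)

/-- If the deletion procedure, started on the closed neighborhood `N[v]`, terminates in a
set `Sv` still containing `v` in which every vertex lies in at least `ℓ` triangles, then
`Sv` is a vertex-ℓ-triangle 2-club of maximum cardinality among those contained in `N[v]`. -/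
theorem stmt_13 [Fintype V] [DecidableEq V] (G : SimpleGraph V) [DecidableRel G.Adj]
    (ℓ : ℕ) (v : V) (Sv : Finset V)
    (hreach : Relation.ReflTransGen (DelStep G ℓ) (insert v (G.neighborFinset v)) Sv)
    (hv : v ∈ Sv)
    (hterm : ∀ w ∈ Sv, ℓ ≤ triCountIn G w Sv) :
    IsVertexTriangleTwoClub G ℓ Sv ∧
    ∀ S : Finset V, IsVertexTriangleTwoClub G ℓ S →
      S ⊆ insert v (G.neighborFinset v) → S.card ≤ Sv.card := by
  have hsub : Sv ⊆ insert v (G.neighborFinset v) := reach_subset hreach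
  have hadj : ∀ u ∈ Sv, u = v ∨ G.Adj v u := by
    intro u hu
    have := hsub hu
    simpa [SimpleGraph.mem_neighborFinset] using this
  constructor
  · constructor
    · intro u hu w hw
      by_cases huw : u = w
      · subst huw
        exact ⟨SimpleGraph.Walk.nil, by simp, by simp [hu]⟩
      rcases hadj u hu with rfl | hu'
      · -- u = v
        rcases hadj w hw with rfl | hw'
        · exact absurd rfl huw
        · exact ⟨SimpleGraph.Walk.cons hw' SimpleGraph.Walk.nil, by simp,
            by intro x hx; simp at hx; rcases hx with rfl | rfl <;> assumption⟩
      rcases hadj w hw with rfl | hw'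
      · exact ⟨SimpleGraph.Walk.cons hu'.symm SimpleGraph.Walk.nil, by simp,
          by intro x hx; simp at hx; rcases hx with rfl | rfl <;> assumption⟩
      · exact ⟨SimpleGraph.Walk.cons hu'.symm (SimpleGraph.Walk.cons hw' SimpleGraph.Walk.nil),
          by simp, by intro x hx; simp at hx; rcases hx with rfl | rfl | rfl <;> assumption⟩
    · exact hterm
  · intro S hS hSA
    exact Finset.card_le_card (club_subset_reach hreach hS.2 hSA)
end

section
/- Let G be a graph and S an edge-ℓ-triangle 2-club with witnessing spanning subgraph Ĝ. If an edge e ∈ Ê is deleted from a supergraph H of Ĝ in which every edge of Ê other than possibly e is present, then at the moment of deletion e is contained in at least ℓ triangles of H. Hence a procedure that only deletes edges lying in fewer than ℓ triangles of the current graph never deletes an edge of Ê (as long as all of Ê is present). -/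
open Finset

variable {V : Type*}

/-- One step of the edge-deletion procedure: delete an edge lying in fewer than `ℓ`
triangles of the current graph. -/
inductive EDelStep (ℓ : ℕ) : SimpleGraph V → SimpleGraph V → Prop
  | step (K : SimpleGraph V) (a b : V) (hab : K.Adj a b)
      (hlow : edgeTriCount K a b < ℓ) : EDelStep ℓ K (K.deleteEdges {s(a, b)})

/-- If `Ĝ = H` witnesses that `S` is an edge-ℓ-triangle 2-club, then in every supergraph
`K` of `H` each edge of `H` lies in at least `ℓ` triangles; hence a procedure that only
deletes edges in fewer than `ℓ` triangles of the current graph never deletes an edge of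
`H` as long as all of `H`'s edges are present. -/
theorem stmt_18 [Fintype V] (G H : SimpleGraph V) (ℓ : ℕ) (S : Finset V)
    (hW : IsWitness G ℓ S H) :
    (∀ K : SimpleGraph V, H ≤ K → ∀ a b, H.Adj a b → ℓ ≤ edgeTriCount K a b) ∧
    (∀ K K' : SimpleGraph V, H ≤ K → Relation.ReflTransGen (EDelStep ℓ) K K' → H ≤ K') := by
  obtain ⟨-, -, -, htri⟩ := hW
  have key : ∀ K : SimpleGraph V, H ≤ K → ∀ a b, H.Adj a b → ℓ ≤ edgeTriCount K a b := by
    intro K hHK a b hab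
    refine (htri a b hab).trans ?_
    apply Set.ncard_le_ncard
    · intro x hx
      exact ⟨hHK hx.1, hHK hx.2⟩
    · exact Set.toFinite _
  refine ⟨key, ?_⟩
  intro K K' hHK hrel
  induction hrel with
  | refl => exact hHK
  | @tail L M _ hstep ih =>
    cases hstep with
    | step a b hab hlow =>
      intro u v huv
      rw [SimpleGraph.deleteEdges_adj]
      refine ⟨ih huv, ?_⟩
      simp only [Set.mem_singleton_iff]
      intro heq
      have : H.Adj a b := by
        rw [Sym2.eq_iff] at heq
        rcases heq with ⟨rfl, rfl⟩ | ⟨rfl, rfl⟩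
        · exact huv
        · exact huv.symm
      exact absurd (key L ih a b this) (not_le.mpr hlow)
end
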